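/- A vector x ∈ R^n lies in C^⊥ if and only if the element x̄ = Σ x_{g_i^{-1}} g_i lies in the right annihilator R(I) = {w : uw = 0 for all u ∈ I}, where I = Ψ^{-1}(C); moreover the map x ↦ x̄ is a bijection between C^⊥ and R(I). -/

import Mathlib

/-- The matrix σ(v) of a group ring element, with (i,j) entry the coefficient of i⁻¹ * j. -/
noncomputable def sigmaMat {R G : Type*} [Semiring R] [Group G] (v : MonoidAlgebra R G) :
    Matrix G G R := Matrix.of fun i j => v.coeff (i⁻¹ * j)

/-- The canonical involution on a group ring, sending Σ αᵢ gᵢ to Σ αᵢ gᵢ⁻¹. -/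
noncomputable def transInvol {R G : Type*} [Semiring R] [Group G] (v : MonoidAlgebra R G) :
    MonoidAlgebra R G := MonoidAlgebra.ofCoeff (Finsupp.equivMapDomain (Equiv.inv G) v.coeff)
/-- The Euclidean dual of a linear code C ⊆ R^ι. -/
noncomputable def dualCode {R ι : Type*} [CommRing R] [Fintype ι] (C : Submodule R (ι → R)) :
    Submodule R (ι → R) where
  carrier := {x | ∀ c ∈ C, ∑ i, x i * c i = 0}
  add_mem' := by
    intro a b ha hb c hc
    have h1 := ha c hc
    have h2 := hb c hc
    simp only [Pi.add_apply, add_mul, Finset.sum_add_distrib, h1, h2, add_zero]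
  zero_mem' := by intro c hc; simp
  smul_mem' := by
    intro r x hx c hc
    have h := hx c hc
    simp only [Pi.smul_apply, smul_eq_mul, mul_assoc]
    rw [← Finset.mul_sum, h, mul_zero]

lemma conv_aux {R G : Type*} [CommRing R] [Group G] [Fintype G]
    (f g : MonoidAlgebra R G) (x : G) :
    (f * g).coeff x = ∑ a : G, f.coeff a * g.coeff (a⁻¹ * x) := by
  rw [MonoidAlgebra.coeff_mul_apply_left, Finsupp.sum_fintype]
  intro a; simp

/-- x ∈ C^⊥ iff x̄ = Σ x_{gᵢ⁻¹} gᵢ lies in the right annihilator R(I) of I = Ψ⁻¹(C);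
    moreover x ↦ x̄ is a bijection from C^⊥ onto R(I). -/
theorem stmt_15 (R G : Type*) [CommRing R] [Fintype R] [Group G] [Fintype G]
    (v : MonoidAlgebra R G) :
    let C := Submodule.span R (Set.range fun i => sigmaMat v i)
    let Iv := {u : MonoidAlgebra R G | (fun g => u.coeff g) ∈ C}
    let RI := {w : MonoidAlgebra R G | ∀ u ∈ Iv, u * w = 0}
    let bar : (G → R) → MonoidAlgebra R G :=
      fun x => MonoidAlgebra.ofCoeff (Finsupp.equivFunOnFinite.symm (fun g => x g⁻¹))
    (∀ x : G → R, x ∈ dualCode C ↔ bar x ∈ RI) ∧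
      Set.BijOn bar (dualCode C : Set (G → R)) RI := by
  intro C Iv RI bar
  have hbar_apply : ∀ (x : G → R) (g : G), (bar x).coeff g = x g⁻¹ := fun x g => rfl
  -- C is invariant under left shifts
  have hshift : ∀ (g : G) (f : G → R), f ∈ C → (fun b => f (g * b)) ∈ C := by
    intro g f hf
    let L : (G → R) →ₗ[R] (G → R) :=
      { toFun := fun f b => f (g * b)
        map_add' := by intros; rfl
        map_smul' := by intros; rfl }
    have h : Submodule.map L C ≤ C := by
      rw [Submodule.map_span, ← Set.range_comp]
      apply Submodule.span_le.mpr
      rintro _ ⟨i, rfl⟩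
      apply Submodule.subset_span
      refine ⟨g⁻¹ * i, ?_⟩
      ext j
      simp [sigmaMat, L, mul_assoc]
    exact h ⟨f, hf, rfl⟩
  have key : ∀ x : G → R, x ∈ dualCode C ↔ bar x ∈ RI := by
    intro x
    constructor
    · intro hx u hu
      ext g
      rw [conv_aux]
      have hc := hx (fun b => u.coeff (g * b)) (hshift g _ hu)
      calc ∑ a : G, u.coeff a * (bar x).coeff (a⁻¹ * g)
          = ∑ b : G, u.coeff (g * b) * (bar x).coeff ((g * b)⁻¹ * g) := by
            rw [← Equiv.sum_comp (Equiv.mulLeft g)]; rfl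
        _ = ∑ b : G, x b * u.coeff (g * b) := by
            apply Finset.sum_congr rfl
            intro b _
            rw [hbar_apply]
            rw [show ((g * b)⁻¹ * g)⁻¹ = b by group]
            ring
        _ = 0 := hc
    · intro hw
      intro c hc
      induction hc using Submodule.span_induction with
      | mem c hcmem =>
        obtain ⟨i, rfl⟩ := hcmem
        set u : MonoidAlgebra R G := MonoidAlgebra.ofCoeff (Finsupp.equivFunOnFinite.symm (sigmaMat v i)) with hu
        have hui : u ∈ Iv := by
          show (fun g => u.coeff g) ∈ C
          have : (fun g => u.coeff g) = sigmaMat v i := rfl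
          rw [this]
          exact Submodule.subset_span ⟨i, rfl⟩
        have h0 := hw u hui
        have h1 : (u * bar x).coeff 1 = 0 := by rw [h0]; simp
        rw [conv_aux] at h1
        calc ∑ j, x j * (fun i => sigmaMat v i) i j
            = ∑ a : G, u.coeff a * (bar x).coeff (a⁻¹ * 1) := by
              apply Finset.sum_congr rfl
              intro a _
              rw [hbar_apply, show (a⁻¹ * 1)⁻¹ = a by group]
              show x a * sigmaMat v i a = sigmaMat v i a * x a
              ring
          _ = 0 := h1
      | zero => simp
      | add c d _ _ hc hd => simp [Pi.add_apply, mul_add, Finset.sum_add_distrib, hc, hd]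
      | smul r c _ hc =>
        simp only [Pi.smul_apply, smul_eq_mul]
        calc ∑ i, x i * (r * c i) = r * ∑ i, x i * c i := by
              rw [Finset.mul_sum]; apply Finset.sum_congr rfl; intros; ring
          _ = 0 := by rw [hc, mul_zero]
  refine ⟨key, ?_, ?_, ?_⟩
  · intro x hx
    exact (key x).mp hx
  · intro x _ y _ hxy
    funext g
    have h2 : (bar x).coeff g⁻¹ = (bar y).coeff g⁻¹ := by rw [hxy]
    rw [hbar_apply, hbar_apply] at h2
    simpa using h2
  · intro w hw
    refine ⟨fun g => w.coeff g⁻¹, ?_, ?_⟩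
    · have hbw : bar (fun g => w.coeff g⁻¹) = w := by
        ext g
        show w.coeff g⁻¹⁻¹ = w.coeff g
        rw [inv_inv]
      show _ ∈ dualCode C
      rw [key]
      rw [hbw]
      exact hw
    · ext g
      show w.coeff g⁻¹⁻¹ = w.coeff g
      rw [inv_inv]
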